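/- Let L, b > 0, T₁ < T₂, μ, λ, s > 0, let d = (d₁, d₂) ∈ ℝ² be a unit vector, and let u₀ be the CGO function. Set R = (0, L) × (0, b). Let u, v : R̄ × [T₁, T₂] → ℂ be continuous, twice continuously differentiable in x and continuously differentiable in t on R̄ × [T₁, T₂]; let H : ℂ → ℂ be continuously real-differentiable; let F, G : R̄ × [T₁, T₂] → ℂ² be continuous and continuously differentiable in x; let f, g : R̄ × [T₁, T₂] → ℂ be continuous; and write w = u − v. Assume: (PDE) ∂ₜ(H(u(x,t)) − H(v(x,t))) − μΔw(x,t) = (f − g)(x,t) − div_x(F − G)(x,t) for all (x,t) ∈ R × (T₁, T₂); (BC) for all x₁ ∈ [0, L], t ∈ [T₁, T₂], on both horizontal edges x₂ = 0 and x₂ = b: w = 0 and ν·(F − G) = μ·ν·∇ₓw, where ν = (0, −1) on {x₂ = 0} and ν = (0, 1) on {x₂ = b}. Then I₁ + I₂ = I₃ + I₄ − I₅ − I₆, where I₁ = μ∫_{T₁}^{T₂}∫_0^b [(w ∂₁u₀ − u₀ ∂₁w)(L, x₂, t) − (w ∂₁u₀ − u₀ ∂₁w)(0, x₂, t)] dx₂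 dt; I₂ = ∫_{T₁}^{T₂}∫_0^b [((F − G)₁·u₀)(L, x₂, t) − ((F − G)₁·u₀)(0, x₂, t)] dx₂ dt; I₃ = ∫_{T₁}^{T₂}∫_R (f − g)·u₀ dx dt; I₄ = ∫_{T₁}^{T₂}∫_R (F − G)·∇ₓu₀ dx dt; I₅ = ∫_R ([(H(u) − H(v))·u₀](x, T₂) − [(H(u) − H(v))·u₀](x, T₁)) dx; I₆ = λ∫_{T₁}^{T₂}∫_R (w − (H(u) − H(v)))·u₀ dx dt. -/

import Mathlib

noncomputable section

/-- Partial derivative in the first spatial variable. -/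
def pd1 (f : ℝ → ℝ → ℝ → ℂ) (x₁ x₂ t : ℝ) : ℂ := deriv (fun y => f y x₂ t) x₁

/-- Partial derivative in the second spatial variable. -/
def pd2 (f : ℝ → ℝ → ℝ → ℂ) (x₁ x₂ t : ℝ) : ℂ := deriv (fun y => f x₁ y t) x₂

/-- Partial derivative in time. -/
def pdt (f : ℝ → ℝ → ℝ → ℂ) (x₁ x₂ t : ℝ) : ℂ := deriv (fun τ => f x₁ x₂ τ) t

/-- Spatial Laplacian `Δ = ∂₁² + ∂₂²`. -/
def lap (f : ℝ → ℝ → ℝ → ℂ) (x₁ x₂ t : ℝ) : ℂ :=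
  pd1 (pd1 f) x₁ x₂ t + pd2 (pd2 f) x₁ x₂ t

/-- The 2D complex geometric optics function
`u₀(x,t) = exp(μ^{-1/2}((s d₁ + i√(s²+λ) d₂) x₁ + (s d₂ − i√(s²+λ) d₁) x₂) + λ t)`. -/
def cgo2 (μ lam s d₁ d₂ : ℝ) (x₁ x₂ t : ℝ) : ℂ :=
  Complex.exp (((Real.sqrt μ : ℝ) : ℂ)⁻¹ *
      (((s : ℂ) * (d₁ : ℂ) + Complex.I * ((Real.sqrt (s ^ 2 + lam) : ℝ) : ℂ) * (d₂ : ℂ)) *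
          (x₁ : ℂ) +
        ((s : ℂ) * (d₂ : ℂ) - Complex.I * ((Real.sqrt (s ^ 2 + lam) : ℝ) : ℂ) * (d₁ : ℂ)) *
          (x₂ : ℂ)) +
    (lam : ℂ) * (t : ℂ))

/-- `w` is continuous on `S`, (jointly) continuously differentiable in `(x,t)`,
twice continuously differentiable in the space variables, with all the indicated
partial derivatives continuous on `S`. -/
structure SmoothC2x (w : ℝ → ℝ → ℝ → ℂ) (S : Set (ℝ × ℝ × ℝ)) : Prop where
  cont : ContinuousOn (fun p : ℝ × ℝ × ℝ => w p.1 p.2.1 p.2.2) S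
  jdiff : ∀ p ∈ S, DifferentiableAt ℝ (fun q : ℝ × ℝ × ℝ => w q.1 q.2.1 q.2.2) p
  d11 : ∀ p ∈ S, DifferentiableAt ℝ (fun y => pd1 w y p.2.1 p.2.2) p.1
  d22 : ∀ p ∈ S, DifferentiableAt ℝ (fun y => pd2 w p.1 y p.2.2) p.2.1
  cont1 : ContinuousOn (fun p : ℝ × ℝ × ℝ => pd1 w p.1 p.2.1 p.2.2) S
  cont2 : ContinuousOn (fun p : ℝ × ℝ × ℝ => pd2 w p.1 p.2.1 p.2.2) S
  contt : ContinuousOn (fun p : ℝ × ℝ × ℝ => pdt w p.1 p.2.1 p.2.2) S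
  cont11 : ContinuousOn (fun p : ℝ × ℝ × ℝ => pd1 (pd1 w) p.1 p.2.1 p.2.2) S
  cont22 : ContinuousOn (fun p : ℝ × ℝ × ℝ => pd2 (pd2 w) p.1 p.2.1 p.2.2) S

/-- `f` is continuous on `S` and continuously differentiable in the space variables. -/
structure SpaceC1x (f : ℝ → ℝ → ℝ → ℂ) (S : Set (ℝ × ℝ × ℝ)) : Prop where
  cont : ContinuousOn (fun p : ℝ × ℝ × ℝ => f p.1 p.2.1 p.2.2) S
  d1 : ∀ p ∈ S, DifferentiableAt ℝ (fun y => f y p.2.1 p.2.2) p.1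
  d2 : ∀ p ∈ S, DifferentiableAt ℝ (fun y => f p.1 y p.2.2) p.2.1
  cont1 : ContinuousOn (fun p : ℝ × ℝ × ℝ => pd1 f p.1 p.2.1 p.2.2) S
  cont2 : ContinuousOn (fun p : ℝ × ℝ × ℝ => pd2 f p.1 p.2.1 p.2.2) S

namespace CGOAux
open MeasureTheory Set intervalIntegral Function

/-- **The integral identity of Lemma 3.3**, `I₁ + I₂ = I₃ + I₄ − I₅ − I₆`, on the
rectangle `R = (0,L) × (0,b)`; the boundary condition `ν·(F − G) = μ ∂_ν w` on the
horizontal edges encodes the measurement matching and the pointwise flux balance. -/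



lemma integrable_box2 {a b c d : ℝ} {h : ℝ → ℝ → ℂ}
    (hc : ContinuousOn (fun p : ℝ × ℝ => h p.1 p.2) (Icc a b ×ˢ Icc c d)) :
    Integrable (uncurry h)
      ((volume.restrict (Ioc a b)).prod (volume.restrict (Ioc c d))) := by
  rw [Measure.prod_restrict]
  have h1 : IntegrableOn (fun p : ℝ × ℝ => h p.1 p.2) (Icc a b ×ˢ Icc c d)
      (volume.prod volume) := by
    rw [← Measure.volume_eq_prod]
    exact hc.integrableOn_compact (isCompact_Icc.prod isCompact_Icc)
  exact h1.mono_set (prod_mono Ioc_subset_Icc_self Ioc_subset_Icc_self)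

/-- Fubini swap for interval integrals of a continuous-on-the-box function. -/
lemma swap2 {a b c d : ℝ} (hab : a ≤ b) (hcd : c ≤ d) {h : ℝ → ℝ → ℂ}
    (hc : ContinuousOn (fun p : ℝ × ℝ => h p.1 p.2) (Icc a b ×ˢ Icc c d)) :
    (∫ x in a..b, ∫ y in c..d, h x y) = ∫ y in c..d, ∫ x in a..b, h x y := by
  rw [integral_of_le hab, integral_of_le hcd]
  simp_rw [integral_of_le hab, integral_of_le hcd]
  exact MeasureTheory.integral_integral_swap (integrable_box2 hc)

/-- Interval integrability of a parametric interval integral. -/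
lemma paramIntegrable2 {a b c d : ℝ} (hab : a ≤ b) (hcd : c ≤ d) {h : ℝ → ℝ → ℂ}
    (hc : ContinuousOn (fun p : ℝ × ℝ => h p.1 p.2) (Icc a b ×ˢ Icc c d)) :
    IntervalIntegrable (fun x => ∫ y in c..d, h x y) volume a b := by
  rw [intervalIntegrable_iff_integrableOn_Ioc_of_le hab]
  have h1 : Integrable (fun x => ∫ y, uncurry h (x, y) ∂(volume.restrict (Ioc c d)))
      (volume.restrict (Ioc a b)) := (integrable_box2 hc).integral_prod_left
  have h2 : (fun x => ∫ y in c..d, h x y)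
      = fun x => ∫ y, uncurry h (x, y) ∂(volume.restrict (Ioc c d)) := by
    funext x; rw [integral_of_le hcd]; rfl
  rw [IntegrableOn, h2]; exact h1

/-- Move the outer integral innermost in a triple iterated interval integral. -/
lemma swap3 {a b c d e r : ℝ} (hab : a ≤ b) (hcd : c ≤ d) (her : e ≤ r)
    {h : ℝ → ℝ → ℝ → ℂ}
    (hc : ContinuousOn (fun p : ℝ × ℝ × ℝ => h p.1 p.2.1 p.2.2)
      (Icc a b ×ˢ Icc c d ×ˢ Icc e r)) :
    (∫ t in e..r, ∫ x in a..b, ∫ y in c..d, h x y t)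
      = ∫ x in a..b, ∫ y in c..d, ∫ t in e..r, h x y t := by
  set μx := volume.restrict (Ioc a b)
  set μy := volume.restrict (Ioc c d)
  set μt := volume.restrict (Ioc e r)
  -- the function in the order (t, (x, y))
  have hcF : ContinuousOn (fun q : ℝ × ℝ × ℝ => h q.2.1 q.2.2 q.1)
      (Icc e r ×ˢ Icc a b ×ˢ Icc c d) := by
    have hmap : Continuous (fun q : ℝ × ℝ × ℝ => ((q.2.1, q.2.2, q.1) : ℝ × ℝ × ℝ)) := by
      fun_prop
    refine (hc.comp hmap.continuousOn ?_)
    rintro ⟨t, x, y⟩ ⟨ht, hx, hy⟩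
    exact ⟨hx, hy, ht⟩
  have hF : Integrable (fun q : ℝ × (ℝ × ℝ) => h q.2.1 q.2.2 q.1)
      (μt.prod (μx.prod μy)) := by
    rw [Measure.prod_restrict, Measure.prod_restrict]
    have h1 : IntegrableOn (fun q : ℝ × ℝ × ℝ => h q.2.1 q.2.2 q.1)
        (Icc e r ×ˢ Icc a b ×ˢ Icc c d) (volume.prod (volume.prod volume)) := by
      have : (volume.prod (volume.prod volume) : Measure (ℝ × ℝ × ℝ)) = volume := by
        rw [← Measure.volume_eq_prod, ← Measure.volume_eq_prod]
      rw [this]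
      exact hcF.integrableOn_compact (isCompact_Icc.prod (isCompact_Icc.prod isCompact_Icc))
    exact h1.mono_set (prod_mono Ioc_subset_Icc_self
      (prod_mono Ioc_subset_Icc_self Ioc_subset_Icc_self))
  have hG : Integrable (fun q : (ℝ × ℝ) × ℝ => h q.1.1 q.1.2 q.2)
      ((μx.prod μy).prod μt) := by
    have := hF.swap
    exact this
  -- Step 1: rewrite inner double integral as product integral (for a.e. t)
  rw [integral_of_le her]
  rw [show (∫ t in Ioc e r, ∫ x in a..b, ∫ y in c..d, h x y t)
      = ∫ t in Ioc e r, ∫ p : ℝ × ℝ, h p.1 p.2 t ∂(μx.prod μy) from ?_]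
  · -- Step 2: Fubini swap outer pair
    have step2 : (∫ t, ∫ p : ℝ × ℝ, h p.1 p.2 t ∂(μx.prod μy) ∂μt)
        = ∫ p : ℝ × ℝ, ∫ t, h p.1 p.2 t ∂μt ∂(μx.prod μy) :=
      MeasureTheory.integral_integral_swap (f := fun t (p : ℝ × ℝ) => h p.1 p.2 t) hF
    rw [step2]
    -- Step 3: unfold the product integral into iterated integrals
    have hInner : Integrable (uncurry (fun x y => ∫ t, h x y t ∂μt)) (μx.prod μy) := by
      have := hG.integral_prod_left
      exact this
    have step3 : (∫ x, ∫ y, (∫ t, h x y t ∂μt) ∂μy ∂μx)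
        = ∫ p, (∫ t, h p.1 p.2 t ∂μt) ∂(μx.prod μy) :=
      MeasureTheory.integral_integral hInner
    rw [← step3]
    rw [integral_of_le hab]
    refine setIntegral_congr_fun measurableSet_Ioc fun x hx => ?_
    rw [integral_of_le hcd]
    refine setIntegral_congr_fun measurableSet_Ioc fun y hy => ?_
    rw [integral_of_le her]
  · -- a.e. rewrite of inner double integral
    refine setIntegral_congr_fun measurableSet_Ioc fun t ht => ?_
    have hslice : Integrable (uncurry (fun x y => h x y t)) (μx.prod μy) := by
      apply integrable_box2
      have hmap : Continuous (fun p : ℝ × ℝ => ((p.1, p.2, t) : ℝ × ℝ × ℝ)) := by fun_prop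
      refine hc.comp hmap.continuousOn ?_
      rintro ⟨x, y⟩ ⟨hx, hy⟩
      exact ⟨hx, hy, Ioc_subset_Icc_self ht⟩
    have step1 : (∫ x, ∫ y, h x y t ∂μy ∂μx) = ∫ p, h p.1 p.2 t ∂(μx.prod μy) :=
      MeasureTheory.integral_integral hslice
    rw [← step1, integral_of_le hab]
    refine setIntegral_congr_fun measurableSet_Ioc fun x hx => ?_
    rw [integral_of_le hcd]

/-- Interval integrability of a parametric double interval integral. -/
lemma paramIntegrable3 {a b c d e r : ℝ} (hab : a ≤ b) (hcd : c ≤ d) (her : e ≤ r)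
    {h : ℝ → ℝ → ℝ → ℂ}
    (hc : ContinuousOn (fun p : ℝ × ℝ × ℝ => h p.1 p.2.1 p.2.2)
      (Icc a b ×ˢ Icc c d ×ˢ Icc e r)) :
    IntervalIntegrable (fun t => ∫ x in a..b, ∫ y in c..d, h x y t) volume e r := by
  set μx := volume.restrict (Ioc a b)
  set μy := volume.restrict (Ioc c d)
  set μt := volume.restrict (Ioc e r)
  have hcF : ContinuousOn (fun q : ℝ × ℝ × ℝ => h q.2.1 q.2.2 q.1)
      (Icc e r ×ˢ Icc a b ×ˢ Icc c d) := by
    have hmap : Continuous (fun q : ℝ × ℝ × ℝ => ((q.2.1, q.2.2, q.1) : ℝ × ℝ × ℝ)) := by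
      fun_prop
    refine hc.comp hmap.continuousOn ?_
    rintro ⟨t, x, y⟩ ⟨ht, hx, hy⟩; exact ⟨hx, hy, ht⟩
  have hF : Integrable (fun q : ℝ × (ℝ × ℝ) => h q.2.1 q.2.2 q.1)
      (μt.prod (μx.prod μy)) := by
    rw [Measure.prod_restrict, Measure.prod_restrict]
    have h1 : IntegrableOn (fun q : ℝ × ℝ × ℝ => h q.2.1 q.2.2 q.1)
        (Icc e r ×ˢ Icc a b ×ˢ Icc c d) (volume.prod (volume.prod volume)) := by
      have hv : (volume.prod (volume.prod volume) : Measure (ℝ × ℝ × ℝ)) = volume := by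
        rw [← Measure.volume_eq_prod, ← Measure.volume_eq_prod]
      rw [hv]
      exact hcF.integrableOn_compact (isCompact_Icc.prod (isCompact_Icc.prod isCompact_Icc))
    exact h1.mono_set (prod_mono Ioc_subset_Icc_self
      (prod_mono Ioc_subset_Icc_self Ioc_subset_Icc_self))
  rw [intervalIntegrable_iff_integrableOn_Ioc_of_le her]
  have h1 : Integrable (fun t => ∫ p : ℝ × ℝ, h p.1 p.2 t ∂(μx.prod μy)) μt := by
    have := hF.integral_prod_left
    simpa using this
  refine (h1.congr ?_)
  rw [Filter.eventuallyEq_iff_exists_mem]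
  refine ⟨Ioc e r, self_mem_ae_restrict measurableSet_Ioc, fun t ht => ?_⟩
  have hslice : Integrable (uncurry (fun x y => h x y t)) (μx.prod μy) := by
    apply integrable_box2
    have hmap : Continuous (fun p : ℝ × ℝ => ((p.1, p.2, t) : ℝ × ℝ × ℝ)) := by fun_prop
    refine hc.comp hmap.continuousOn ?_
    rintro ⟨x, y⟩ ⟨hx, hy⟩; exact ⟨hx, hy, Ioc_subset_Icc_self ht⟩
  have step1 : (∫ x, ∫ y, h x y t ∂μy ∂μx) = ∫ p : ℝ × ℝ, h p.1 p.2 t ∂(μx.prod μy) :=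
    MeasureTheory.integral_integral hslice
  beta_reduce
  rw [← step1, integral_of_le hab]
  refine setIntegral_congr_fun measurableSet_Ioc fun x hx => ?_
  rw [integral_of_le hcd]

/-- Congruence for interval integrals from equality on the open interval. -/
lemma intCongrIoo {a b : ℝ} (hab : a ≤ b) {f g : ℝ → ℂ}
    (h : ∀ x ∈ Ioo a b, f x = g x) :
    (∫ x in a..b, f x) = ∫ x in a..b, g x := by
  rw [integral_of_le hab, integral_of_le hab,
    integral_Ioc_eq_integral_Ioo, integral_Ioc_eq_integral_Ioo]
  exact setIntegral_congr_fun measurableSet_Ioo h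

/-- Congruence for triple iterated interval integrals from equality on the open box. -/
lemma Jcongr {a b c d e r : ℝ} (hab : a ≤ b) (hcd : c ≤ d) (her : e ≤ r)
    {h₁ h₂ : ℝ → ℝ → ℝ → ℂ}
    (h : ∀ x ∈ Ioo a b, ∀ y ∈ Ioo c d, ∀ t ∈ Ioo e r, h₁ x y t = h₂ x y t) :
    (∫ t in e..r, ∫ x in a..b, ∫ y in c..d, h₁ x y t)
      = ∫ t in e..r, ∫ x in a..b, ∫ y in c..d, h₂ x y t := by
  refine intCongrIoo her fun t ht => ?_
  refine intCongrIoo hab fun x hx => ?_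
  refine intCongrIoo hcd fun y hy => ?_
  exact h x hx y hy t ht

/-- Additivity of double iterated interval integrals. -/
lemma J2add {a b c d : ℝ} (hab : a ≤ b) (hcd : c ≤ d) {h₁ h₂ : ℝ → ℝ → ℂ}
    (hc1 : ContinuousOn (fun p : ℝ × ℝ => h₁ p.1 p.2) (Icc a b ×ˢ Icc c d))
    (hc2 : ContinuousOn (fun p : ℝ × ℝ => h₂ p.1 p.2) (Icc a b ×ˢ Icc c d)) :
    (∫ x in a..b, ∫ y in c..d, (h₁ x y + h₂ x y))
      = (∫ x in a..b, ∫ y in c..d, h₁ x y) + ∫ x in a..b, ∫ y in c..d, h₂ x y := by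
  rw [← intervalIntegral.integral_add (paramIntegrable2 hab hcd hc1)
    (paramIntegrable2 hab hcd hc2)]
  refine intervalIntegral.integral_congr fun x hx => ?_
  rw [uIcc_of_le hab] at hx
  have s1 : IntervalIntegrable (fun y => h₁ x y) volume c d := by
    apply ContinuousOn.intervalIntegrable
    rw [uIcc_of_le hcd]
    exact (hc1.comp (by fun_prop : Continuous fun y : ℝ => ((x, y) : ℝ × ℝ)).continuousOn
      (fun y hy => ⟨hx, hy⟩))
  have s2 : IntervalIntegrable (fun y => h₂ x y) volume c d := by
    apply ContinuousOn.intervalIntegrable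
    rw [uIcc_of_le hcd]
    exact (hc2.comp (by fun_prop : Continuous fun y : ℝ => ((x, y) : ℝ × ℝ)).continuousOn
      (fun y hy => ⟨hx, hy⟩))
  exact intervalIntegral.integral_add s1 s2

/-- Additivity of triple iterated interval integrals. -/
lemma Jadd {a b c d e r : ℝ} (hab : a ≤ b) (hcd : c ≤ d) (her : e ≤ r)
    {h₁ h₂ : ℝ → ℝ → ℝ → ℂ}
    (hc1 : ContinuousOn (fun p : ℝ × ℝ × ℝ => h₁ p.1 p.2.1 p.2.2)
      (Icc a b ×ˢ Icc c d ×ˢ Icc e r))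
    (hc2 : ContinuousOn (fun p : ℝ × ℝ × ℝ => h₂ p.1 p.2.1 p.2.2)
      (Icc a b ×ˢ Icc c d ×ˢ Icc e r)) :
    (∫ t in e..r, ∫ x in a..b, ∫ y in c..d, (h₁ x y t + h₂ x y t))
      = (∫ t in e..r, ∫ x in a..b, ∫ y in c..d, h₁ x y t)
        + ∫ t in e..r, ∫ x in a..b, ∫ y in c..d, h₂ x y t := by
  rw [← intervalIntegral.integral_add (paramIntegrable3 hab hcd her hc1)
    (paramIntegrable3 hab hcd her hc2)]
  refine intervalIntegral.integral_congr fun t ht => ?_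
  rw [uIcc_of_le her] at ht
  have e1 : ContinuousOn (fun p : ℝ × ℝ => h₁ p.1 p.2 t) (Icc a b ×ˢ Icc c d) :=
    hc1.comp (by fun_prop : Continuous fun p : ℝ × ℝ => ((p.1, p.2, t) : ℝ × ℝ × ℝ)).continuousOn
      (fun p hp => ⟨hp.1, hp.2, ht⟩)
  have e2 : ContinuousOn (fun p : ℝ × ℝ => h₂ p.1 p.2 t) (Icc a b ×ˢ Icc c d) :=
    hc2.comp (by fun_prop : Continuous fun p : ℝ × ℝ => ((p.1, p.2, t) : ℝ × ℝ × ℝ)).continuousOn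
      (fun p hp => ⟨hp.1, hp.2, ht⟩)
  exact J2add hab hcd e1 e2

/-- FTC on a closed interval with derivative known on the interior. -/
lemma ftcIoo {a b : ℝ} (hab : a ≤ b) {f f' : ℝ → ℂ}
    (hcont : ContinuousOn f (Icc a b))
    (hd : ∀ x ∈ Ioo a b, HasDerivAt f (f' x) x)
    (hint : IntervalIntegrable f' volume a b) :
    (∫ x in a..b, f' x) = f b - f a :=
  intervalIntegral.integral_eq_sub_of_hasDeriv_right_of_le hab hcont
    (fun x hx => (hd x hx).hasDerivWithinAt) hint



/-- first exponent coefficient -/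
def cA (μ lam s d₁ d₂ : ℝ) : ℂ :=
  ((Real.sqrt μ : ℝ) : ℂ)⁻¹ *
    ((s : ℂ) * (d₁ : ℂ) + Complex.I * ((Real.sqrt (s ^ 2 + lam) : ℝ) : ℂ) * (d₂ : ℂ))

/-- second exponent coefficient -/
def cB (μ lam s d₁ d₂ : ℝ) : ℂ :=
  ((Real.sqrt μ : ℝ) : ℂ)⁻¹ *
    ((s : ℂ) * (d₂ : ℂ) - Complex.I * ((Real.sqrt (s ^ 2 + lam) : ℝ) : ℂ) * (d₁ : ℂ))

lemma cgo2_continuous (μ lam s d₁ d₂ : ℝ) :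
    Continuous (fun p : ℝ × ℝ × ℝ => cgo2 μ lam s d₁ d₂ p.1 p.2.1 p.2.2) := by
  unfold cgo2; fun_prop

lemma hasDerivAt_ofReal (x : ℝ) : HasDerivAt (fun z : ℝ => (z : ℂ)) 1 x := by
  exact Complex.ofRealCLM.hasDerivAt (x := x)

lemma cgo2_d1 (μ lam s d₁ d₂ x y t : ℝ) :
    HasDerivAt (fun z => cgo2 μ lam s d₁ d₂ z y t)
      (cA μ lam s d₁ d₂ * cgo2 μ lam s d₁ d₂ x y t) x := by
  unfold cgo2 cA
  set c := ((Real.sqrt μ : ℝ) : ℂ)⁻¹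
  set K₁ := ((s : ℂ) * (d₁ : ℂ) + Complex.I * ((Real.sqrt (s ^ 2 + lam) : ℝ) : ℂ) * (d₂ : ℂ))
  set K₂ := ((s : ℂ) * (d₂ : ℂ) - Complex.I * ((Real.sqrt (s ^ 2 + lam) : ℝ) : ℂ) * (d₁ : ℂ))
  have h1 : HasDerivAt (fun z : ℝ => c * (K₁ * (z : ℂ) + K₂ * (y : ℂ)) + (lam : ℂ) * (t : ℂ))
      (c * K₁) x := by
    have := (((hasDerivAt_ofReal x).const_mul K₁).add_const (K₂ * (y : ℂ))).const_mul c
    simpa [mul_comm, mul_assoc, mul_one] using this.add_const ((lam : ℂ) * (t : ℂ))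
  simpa [mul_comm] using h1.cexp

lemma cgo2_d2 (μ lam s d₁ d₂ x y t : ℝ) :
    HasDerivAt (fun z => cgo2 μ lam s d₁ d₂ x z t)
      (cB μ lam s d₁ d₂ * cgo2 μ lam s d₁ d₂ x y t) y := by
  unfold cgo2 cB
  set c := ((Real.sqrt μ : ℝ) : ℂ)⁻¹
  set K₁ := ((s : ℂ) * (d₁ : ℂ) + Complex.I * ((Real.sqrt (s ^ 2 + lam) : ℝ) : ℂ) * (d₂ : ℂ))
  set K₂ := ((s : ℂ) * (d₂ : ℂ) - Complex.I * ((Real.sqrt (s ^ 2 + lam) : ℝ) : ℂ) * (d₁ : ℂ))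
  have h1 : HasDerivAt (fun z : ℝ => c * (K₁ * (x : ℂ) + K₂ * (z : ℂ)) + (lam : ℂ) * (t : ℂ))
      (c * K₂) y := by
    have := ((((hasDerivAt_ofReal y).const_mul K₂).const_add (K₁ * (x : ℂ))).const_mul c)
    simpa [mul_comm, mul_assoc, mul_one] using this.add_const ((lam : ℂ) * (t : ℂ))
  simpa [mul_comm] using h1.cexp

lemma cgo2_dt (μ lam s d₁ d₂ x y t : ℝ) :
    HasDerivAt (fun τ => cgo2 μ lam s d₁ d₂ x y τ)
      ((lam : ℂ) * cgo2 μ lam s d₁ d₂ x y t) t := by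
  unfold cgo2
  set E := (((Real.sqrt μ : ℝ) : ℂ)⁻¹ *
      (((s : ℂ) * (d₁ : ℂ) + Complex.I * ((Real.sqrt (s ^ 2 + lam) : ℝ) : ℂ) * (d₂ : ℂ)) *
          (x : ℂ) +
        ((s : ℂ) * (d₂ : ℂ) - Complex.I * ((Real.sqrt (s ^ 2 + lam) : ℝ) : ℂ) * (d₁ : ℂ)) *
          (y : ℂ)))
  have h1 : HasDerivAt (fun τ : ℝ => E + (lam : ℂ) * (τ : ℂ)) (lam : ℂ) t := by
    have := ((hasDerivAt_ofReal t).const_mul (lam : ℂ)).const_add E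
    simpa using this
  simpa [mul_comm] using h1.cexp

lemma cgo2_key {μ lam s : ℝ} (hμ : 0 < μ) (hlam : 0 < lam) (hs : 0 < s) {d₁ d₂ : ℝ}
    (hd : d₁ ^ 2 + d₂ ^ 2 = 1) :
    (μ : ℂ) * (cA μ lam s d₁ d₂ ^ 2 + cB μ lam s d₁ d₂ ^ 2) = -(lam : ℂ) := by
  unfold cA cB
  have hρ : ((Real.sqrt (s ^ 2 + lam) : ℝ) : ℂ) ^ 2 = (s : ℂ) ^ 2 + (lam : ℂ) := by
    rw [← Complex.ofReal_pow, Real.sq_sqrt (by positivity)]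
    push_cast; ring
  have hμc : ((Real.sqrt μ : ℝ) : ℂ) ^ 2 = (μ : ℂ) := by
    rw [← Complex.ofReal_pow, Real.sq_sqrt hμ.le]
  have hμne : ((Real.sqrt μ : ℝ) : ℂ) ≠ 0 :=
    Complex.ofReal_ne_zero.mpr (ne_of_gt (Real.sqrt_pos.mpr hμ))
  have hdc : (d₁ : ℂ) ^ 2 + (d₂ : ℂ) ^ 2 = 1 := by exact_mod_cast hd
  have hI : (Complex.I : ℂ) ^ 2 = -1 := Complex.I_sq
  set ρ := ((Real.sqrt (s ^ 2 + lam) : ℝ) : ℂ)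
  set c := ((Real.sqrt μ : ℝ) : ℂ)
  set K₁ := ((s : ℂ) * (d₁ : ℂ) + Complex.I * ρ * (d₂ : ℂ))
  set K₂ := ((s : ℂ) * (d₂ : ℂ) - Complex.I * ρ * (d₁ : ℂ))
  have h1 : (μ : ℂ) * ((c⁻¹ * K₁) ^ 2 + (c⁻¹ * K₂) ^ 2) = K₁ ^ 2 + K₂ ^ 2 := by
    rw [← hμc]; field_simp
  have h2 : K₁ ^ 2 + K₂ ^ 2 = -(lam : ℂ) := by
    linear_combination ((s:ℂ)^2 + Complex.I^2 * ρ^2) * hdc + ρ^2 * hI - hρ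
  rw [h1, h2]



lemma hasDerivAt_slice1 {f : ℝ → ℝ → ℝ → ℂ} {x y t : ℝ}
    (h : DifferentiableAt ℝ (fun q : ℝ × ℝ × ℝ => f q.1 q.2.1 q.2.2) (x, y, t)) :
    HasDerivAt (fun z => f z y t) (pd1 f x y t) x := by
  have hmap : DifferentiableAt ℝ (fun z : ℝ => ((z, y, t) : ℝ × ℝ × ℝ)) x := by fun_prop
  have h2 : DifferentiableAt ℝ (fun z => f z y t) x := by have h3 := h.comp x hmap; exact h3
  simpa [pd1] using h2.hasDerivAt

lemma hasDerivAt_slice2 {f : ℝ → ℝ → ℝ → ℂ} {x y t : ℝ}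
    (h : DifferentiableAt ℝ (fun q : ℝ × ℝ × ℝ => f q.1 q.2.1 q.2.2) (x, y, t)) :
    HasDerivAt (fun z => f x z t) (pd2 f x y t) y := by
  have hmap : DifferentiableAt ℝ (fun z : ℝ => ((x, z, t) : ℝ × ℝ × ℝ)) y := by fun_prop
  have h2 : DifferentiableAt ℝ (fun z => f x z t) y := by have h3 := h.comp y hmap; exact h3
  simpa [pd2] using h2.hasDerivAt

lemma hasDerivAt_slicet {f : ℝ → ℝ → ℝ → ℂ} {x y t : ℝ}
    (h : DifferentiableAt ℝ (fun q : ℝ × ℝ × ℝ => f q.1 q.2.1 q.2.2) (x, y, t)) :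
    HasDerivAt (fun τ => f x y τ) (pdt f x y t) t := by
  have hmap : DifferentiableAt ℝ (fun τ : ℝ => ((x, y, τ) : ℝ × ℝ × ℝ)) t := by fun_prop
  have h2 : DifferentiableAt ℝ (fun τ => f x y τ) t := by have h3 := h.comp t hmap; exact h3
  simpa [pdt] using h2.hasDerivAt


lemma contOn_slice1 {F : ℝ → ℝ → ℝ → ℂ} {S : Set (ℝ × ℝ × ℝ)}
    (h : ContinuousOn (fun p : ℝ × ℝ × ℝ => F p.1 p.2.1 p.2.2) S) {y t : ℝ} {I : Set ℝ}
    (hmap : ∀ x ∈ I, ((x, y, t) : ℝ × ℝ × ℝ) ∈ S) :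
    ContinuousOn (fun x => F x y t) I :=
  h.comp ((by fun_prop : Continuous fun x : ℝ => ((x, y, t) : ℝ × ℝ × ℝ))).continuousOn hmap

lemma contOn_slice2 {F : ℝ → ℝ → ℝ → ℂ} {S : Set (ℝ × ℝ × ℝ)}
    (h : ContinuousOn (fun p : ℝ × ℝ × ℝ => F p.1 p.2.1 p.2.2) S) {x t : ℝ} {I : Set ℝ}
    (hmap : ∀ y ∈ I, ((x, y, t) : ℝ × ℝ × ℝ) ∈ S) :
    ContinuousOn (fun y => F x y t) I :=
  h.comp ((by fun_prop : Continuous fun y : ℝ => ((x, y, t) : ℝ × ℝ × ℝ))).continuousOn hmap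

lemma contOn_slicet {F : ℝ → ℝ → ℝ → ℂ} {S : Set (ℝ × ℝ × ℝ)}
    (h : ContinuousOn (fun p : ℝ × ℝ × ℝ => F p.1 p.2.1 p.2.2) S) {x y : ℝ} {I : Set ℝ}
    (hmap : ∀ t ∈ I, ((x, y, t) : ℝ × ℝ × ℝ) ∈ S) :
    ContinuousOn (fun t => F x y t) I :=
  h.comp ((by fun_prop : Continuous fun t : ℝ => ((x, y, t) : ℝ × ℝ × ℝ))).continuousOn hmap

lemma contOn_slice12 {F : ℝ → ℝ → ℝ → ℂ} {S : Set (ℝ × ℝ × ℝ)}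
    (h : ContinuousOn (fun p : ℝ × ℝ × ℝ => F p.1 p.2.1 p.2.2) S) {t : ℝ} {I J : Set ℝ}
    (hmap : ∀ p : ℝ × ℝ, p ∈ I ×ˢ J → ((p.1, p.2, t) : ℝ × ℝ × ℝ) ∈ S) :
    ContinuousOn (fun p : ℝ × ℝ => F p.1 p.2 t) (I ×ˢ J) :=
  h.comp ((by fun_prop : Continuous fun p : ℝ × ℝ => ((p.1, p.2, t) : ℝ × ℝ × ℝ))).continuousOn hmap

lemma contOn_slice23 {F : ℝ → ℝ → ℝ → ℂ} {S : Set (ℝ × ℝ × ℝ)}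
    (h : ContinuousOn (fun p : ℝ × ℝ × ℝ => F p.1 p.2.1 p.2.2) S) {x : ℝ} {I J : Set ℝ}
    (hmap : ∀ p : ℝ × ℝ, p ∈ I ×ˢ J → ((x, p.1, p.2) : ℝ × ℝ × ℝ) ∈ S) :
    ContinuousOn (fun p : ℝ × ℝ => F x p.1 p.2) (I ×ˢ J) :=
  h.comp ((by fun_prop : Continuous fun p : ℝ × ℝ => ((x, p.1, p.2) : ℝ × ℝ × ℝ))).continuousOn hmap

lemma contOn_slice13 {F : ℝ → ℝ → ℝ → ℂ} {S : Set (ℝ × ℝ × ℝ)}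
    (h : ContinuousOn (fun p : ℝ × ℝ × ℝ => F p.1 p.2.1 p.2.2) S) {y : ℝ} {I J : Set ℝ}
    (hmap : ∀ p : ℝ × ℝ, p ∈ I ×ˢ J → ((p.1, y, p.2) : ℝ × ℝ × ℝ) ∈ S) :
    ContinuousOn (fun p : ℝ × ℝ => F p.1 y p.2) (I ×ˢ J) :=
  h.comp ((by fun_prop : Continuous fun p : ℝ × ℝ => ((p.1, y, p.2) : ℝ × ℝ × ℝ))).continuousOn hmap

lemma intIntOn {c d : ℝ} (hcd : c ≤ d) {φ : ℝ → ℂ} (h : ContinuousOn φ (Icc c d)) :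
    IntervalIntegrable φ volume c d := by
  apply ContinuousOn.intervalIntegrable; rwa [uIcc_of_le hcd]

end CGOAux
theorem integral_identity_I1_6
    (L b T₁ T₂ μ lam s d₁ d₂ : ℝ)
    (hL : 0 < L) (hb : 0 < b) (hT : T₁ < T₂)
    (hμ : 0 < μ) (hlam : 0 < lam) (hs : 0 < s)
    (hd : d₁ ^ 2 + d₂ ^ 2 = 1)
    (u v w u₀ : ℝ → ℝ → ℝ → ℂ) (H : ℂ → ℂ)
    (F₁ F₂ G₁ G₂ f g : ℝ → ℝ → ℝ → ℂ)
    (hw : ∀ x₁ x₂ t, w x₁ x₂ t = u x₁ x₂ t - v x₁ x₂ t)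
    (hu₀ : u₀ = cgo2 μ lam s d₁ d₂)
    (hu : SmoothC2x u (Set.Icc (0:ℝ) L ×ˢ (Set.Icc (0:ℝ) b ×ˢ Set.Icc T₁ T₂)))
    (hv : SmoothC2x v (Set.Icc (0:ℝ) L ×ˢ (Set.Icc (0:ℝ) b ×ˢ Set.Icc T₁ T₂)))
    (hH : ∀ z, DifferentiableAt ℝ H z) (hH' : Continuous (fun z => fderiv ℝ H z))
    (hF₁ : SpaceC1x F₁ (Set.Icc (0:ℝ) L ×ˢ (Set.Icc (0:ℝ) b ×ˢ Set.Icc T₁ T₂)))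
    (hF₂ : SpaceC1x F₂ (Set.Icc (0:ℝ) L ×ˢ (Set.Icc (0:ℝ) b ×ˢ Set.Icc T₁ T₂)))
    (hG₁ : SpaceC1x G₁ (Set.Icc (0:ℝ) L ×ˢ (Set.Icc (0:ℝ) b ×ˢ Set.Icc T₁ T₂)))
    (hG₂ : SpaceC1x G₂ (Set.Icc (0:ℝ) L ×ˢ (Set.Icc (0:ℝ) b ×ˢ Set.Icc T₁ T₂)))
    (hf : ContinuousOn (fun p : ℝ × ℝ × ℝ => f p.1 p.2.1 p.2.2)
      (Set.Icc (0:ℝ) L ×ˢ (Set.Icc (0:ℝ) b ×ˢ Set.Icc T₁ T₂)))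
    (hg : ContinuousOn (fun p : ℝ × ℝ × ℝ => g p.1 p.2.1 p.2.2)
      (Set.Icc (0:ℝ) L ×ˢ (Set.Icc (0:ℝ) b ×ˢ Set.Icc T₁ T₂)))
    -- (PDE)
    (hPDE : ∀ x₁ ∈ Set.Ioo (0:ℝ) L, ∀ x₂ ∈ Set.Ioo (0:ℝ) b, ∀ t ∈ Set.Ioo T₁ T₂,
      pdt (fun a b' c => H (u a b' c) - H (v a b' c)) x₁ x₂ t
          - (μ : ℂ) * lap w x₁ x₂ t
        = (f x₁ x₂ t - g x₁ x₂ t)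
          - (pd1 (fun a b' c => F₁ a b' c - G₁ a b' c) x₁ x₂ t
            + pd2 (fun a b' c => F₂ a b' c - G₂ a b' c) x₁ x₂ t))
    -- (BC) on both horizontal edges: `w = 0` and `ν·(F − G) = μ ν·∇ₓ w`
    (hBC : ∀ x₁ ∈ Set.Icc (0:ℝ) L, ∀ t ∈ Set.Icc T₁ T₂,
      w x₁ 0 t = 0 ∧ w x₁ b t = 0 ∧
      -(F₂ x₁ 0 t - G₂ x₁ 0 t) = (μ : ℂ) * (-(pd2 w x₁ 0 t)) ∧
      (F₂ x₁ b t - G₂ x₁ b t) = (μ : ℂ) * pd2 w x₁ b t) :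
    -- I₁ + I₂ = I₃ + I₄ − I₅ − I₆
    ((μ : ℂ) * ∫ t in T₁..T₂, ∫ x₂ in (0:ℝ)..b,
        ((w L x₂ t * pd1 u₀ L x₂ t - u₀ L x₂ t * pd1 w L x₂ t)
          - (w 0 x₂ t * pd1 u₀ 0 x₂ t - u₀ 0 x₂ t * pd1 w 0 x₂ t)))
    + (∫ t in T₁..T₂, ∫ x₂ in (0:ℝ)..b,
        ((F₁ L x₂ t - G₁ L x₂ t) * u₀ L x₂ t - (F₁ 0 x₂ t - G₁ 0 x₂ t) * u₀ 0 x₂ t))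
    = (∫ t in T₁..T₂, ∫ x₁ in (0:ℝ)..L, ∫ x₂ in (0:ℝ)..b,
        (f x₁ x₂ t - g x₁ x₂ t) * u₀ x₁ x₂ t)
      + (∫ t in T₁..T₂, ∫ x₁ in (0:ℝ)..L, ∫ x₂ in (0:ℝ)..b,
          ((F₁ x₁ x₂ t - G₁ x₁ x₂ t) * pd1 u₀ x₁ x₂ t
            + (F₂ x₁ x₂ t - G₂ x₁ x₂ t) * pd2 u₀ x₁ x₂ t))
      - (∫ x₁ in (0:ℝ)..L, ∫ x₂ in (0:ℝ)..b,
          ((H (u x₁ x₂ T₂) - H (v x₁ x₂ T₂)) * u₀ x₁ x₂ T₂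
            - (H (u x₁ x₂ T₁) - H (v x₁ x₂ T₁)) * u₀ x₁ x₂ T₁))
      - ((lam : ℂ) * ∫ t in T₁..T₂, ∫ x₁ in (0:ℝ)..L, ∫ x₂ in (0:ℝ)..b,
          (w x₁ x₂ t - (H (u x₁ x₂ t) - H (v x₁ x₂ t))) * u₀ x₁ x₂ t) := by
  subst hu₀
  have hwfun : w = fun a b' c => u a b' c - v a b' c := by
    funext a b' c; exact hw a b' c
  subst hwfun
  set S : Set (ℝ × ℝ × ℝ) := Set.Icc (0:ℝ) L ×ˢ (Set.Icc (0:ℝ) b ×ˢ Set.Icc T₁ T₂) with hSdef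
  set U := cgo2 μ lam s d₁ d₂ with hUdef
  set w := fun a b' c => u a b' c - v a b' c with hwdef
  set α := CGOAux.cA μ lam s d₁ d₂ with hαdef
  set β := CGOAux.cB μ lam s d₁ d₂ with hβdef
  have hUd1 : ∀ x y t : ℝ, HasDerivAt (fun z => U z y t) (α * U x y t) x :=
    fun x y t => CGOAux.cgo2_d1 μ lam s d₁ d₂ x y t
  have hUd2 : ∀ x y t : ℝ, HasDerivAt (fun z => U x z t) (β * U x y t) y :=
    fun x y t => CGOAux.cgo2_d2 μ lam s d₁ d₂ x y t
  have hUdt : ∀ x y t : ℝ, HasDerivAt (fun τ => U x y τ) ((lam : ℂ) * U x y t) t :=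
    fun x y t => CGOAux.cgo2_dt μ lam s d₁ d₂ x y t
  have hpd1U : ∀ x y t : ℝ, pd1 U x y t = α * U x y t := by
    intro x y t; simp only [pd1]; exact (hUd1 x y t).deriv
  have hpd2U : ∀ x y t : ℝ, pd2 U x y t = β * U x y t := by
    intro x y t; simp only [pd2]; exact (hUd2 x y t).deriv
  simp only [hpd1U, hpd2U]
  have hL0 : (0:ℝ) ≤ L := hL.le
  have hb0 : (0:ℝ) ≤ b := hb.le
  have hT0 : T₁ ≤ T₂ := hT.le
  have hmem : ∀ {x y t : ℝ}, x ∈ Set.Icc (0:ℝ) L → y ∈ Set.Icc (0:ℝ) b →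
      t ∈ Set.Icc T₁ T₂ → ((x, y, t) : ℝ × ℝ × ℝ) ∈ S :=
    fun hx hy ht => ⟨hx, hy, ht⟩
  -- first-order slice derivatives
  have hu1 : ∀ {x y t : ℝ}, ((x, y, t) : ℝ × ℝ × ℝ) ∈ S →
      HasDerivAt (fun z => u z y t) (pd1 u x y t) x :=
    fun hp => CGOAux.hasDerivAt_slice1 (hu.jdiff _ hp)
  have hv1 : ∀ {x y t : ℝ}, ((x, y, t) : ℝ × ℝ × ℝ) ∈ S →
      HasDerivAt (fun z => v z y t) (pd1 v x y t) x :=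
    fun hp => CGOAux.hasDerivAt_slice1 (hv.jdiff _ hp)
  have hu2 : ∀ {x y t : ℝ}, ((x, y, t) : ℝ × ℝ × ℝ) ∈ S →
      HasDerivAt (fun z => u x z t) (pd2 u x y t) y :=
    fun hp => CGOAux.hasDerivAt_slice2 (hu.jdiff _ hp)
  have hv2 : ∀ {x y t : ℝ}, ((x, y, t) : ℝ × ℝ × ℝ) ∈ S →
      HasDerivAt (fun z => v x z t) (pd2 v x y t) y :=
    fun hp => CGOAux.hasDerivAt_slice2 (hv.jdiff _ hp)
  have hut : ∀ {x y t : ℝ}, ((x, y, t) : ℝ × ℝ × ℝ) ∈ S →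
      HasDerivAt (fun τ => u x y τ) (pdt u x y t) t :=
    fun hp => CGOAux.hasDerivAt_slicet (hu.jdiff _ hp)
  have hvt : ∀ {x y t : ℝ}, ((x, y, t) : ℝ × ℝ × ℝ) ∈ S →
      HasDerivAt (fun τ => v x y τ) (pdt v x y t) t :=
    fun hp => CGOAux.hasDerivAt_slicet (hv.jdiff _ hp)
  -- second-order slice derivatives
  have hu11 : ∀ {x y t : ℝ}, ((x, y, t) : ℝ × ℝ × ℝ) ∈ S →
      HasDerivAt (fun z => pd1 u z y t) (pd1 (pd1 u) x y t) x := by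
    intro x y t hp
    simpa [pd1] using (hu.d11 _ hp).hasDerivAt
  have hv11 : ∀ {x y t : ℝ}, ((x, y, t) : ℝ × ℝ × ℝ) ∈ S →
      HasDerivAt (fun z => pd1 v z y t) (pd1 (pd1 v) x y t) x := by
    intro x y t hp
    simpa [pd1] using (hv.d11 _ hp).hasDerivAt
  have hu22 : ∀ {x y t : ℝ}, ((x, y, t) : ℝ × ℝ × ℝ) ∈ S →
      HasDerivAt (fun z => pd2 u x z t) (pd2 (pd2 u) x y t) y := by
    intro x y t hp
    simpa [pd2] using (hu.d22 _ hp).hasDerivAt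
  have hv22 : ∀ {x y t : ℝ}, ((x, y, t) : ℝ × ℝ × ℝ) ∈ S →
      HasDerivAt (fun z => pd2 v x z t) (pd2 (pd2 v) x y t) y := by
    intro x y t hp
    simpa [pd2] using (hv.d22 _ hp).hasDerivAt
  -- F/G slice derivatives
  have hF₁1 : ∀ {x y t : ℝ}, ((x, y, t) : ℝ × ℝ × ℝ) ∈ S →
      HasDerivAt (fun z => F₁ z y t) (pd1 F₁ x y t) x := by
    intro x y t hp; simpa [pd1] using (hF₁.d1 _ hp).hasDerivAt
  have hG₁1 : ∀ {x y t : ℝ}, ((x, y, t) : ℝ × ℝ × ℝ) ∈ S →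
      HasDerivAt (fun z => G₁ z y t) (pd1 G₁ x y t) x := by
    intro x y t hp; simpa [pd1] using (hG₁.d1 _ hp).hasDerivAt
  have hF₂2 : ∀ {x y t : ℝ}, ((x, y, t) : ℝ × ℝ × ℝ) ∈ S →
      HasDerivAt (fun z => F₂ x z t) (pd2 F₂ x y t) y := by
    intro x y t hp; simpa [pd2] using (hF₂.d2 _ hp).hasDerivAt
  have hG₂2 : ∀ {x y t : ℝ}, ((x, y, t) : ℝ × ℝ × ℝ) ∈ S →
      HasDerivAt (fun z => G₂ x z t) (pd2 G₂ x y t) y := by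
    intro x y t hp; simpa [pd2] using (hG₂.d2 _ hp).hasDerivAt
  -- w facts
  have hw1 : ∀ {x y t : ℝ}, ((x, y, t) : ℝ × ℝ × ℝ) ∈ S →
      HasDerivAt (fun z => w z y t) (pd1 u x y t - pd1 v x y t) x := by
    intro x y t hp; exact (hu1 hp).sub (hv1 hp)
  have hw2 : ∀ {x y t : ℝ}, ((x, y, t) : ℝ × ℝ × ℝ) ∈ S →
      HasDerivAt (fun z => w x z t) (pd2 u x y t - pd2 v x y t) y := by
    intro x y t hp; exact (hu2 hp).sub (hv2 hp)
  have hpd1w : ∀ {x y t : ℝ}, ((x, y, t) : ℝ × ℝ × ℝ) ∈ S →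
      pd1 w x y t = pd1 u x y t - pd1 v x y t := by
    intro x y t hp
    have := (hw1 hp).deriv
    simpa [pd1] using this
  have hpd2w : ∀ {x y t : ℝ}, ((x, y, t) : ℝ × ℝ × ℝ) ∈ S →
      pd2 w x y t = pd2 u x y t - pd2 v x y t := by
    intro x y t hp
    have := (hw2 hp).deriv
    simpa [pd2] using this
  have hw11 : ∀ {x y t : ℝ}, x ∈ Set.Ioo (0:ℝ) L → y ∈ Set.Icc (0:ℝ) b →
      t ∈ Set.Icc T₁ T₂ →
      HasDerivAt (fun z => pd1 w z y t) (pd1 (pd1 u) x y t - pd1 (pd1 v) x y t) x := by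
    intro x y t hx hy ht
    have hp : ((x, y, t) : ℝ × ℝ × ℝ) ∈ S := hmem (Set.Ioo_subset_Icc_self hx) hy ht
    refine ((hu11 hp).sub (hv11 hp)).congr_of_eventuallyEq ?_
    filter_upwards [Ioo_mem_nhds hx.1 hx.2] with z hz
    exact hpd1w (hmem (Set.Ioo_subset_Icc_self hz) hy ht)
  have hw22 : ∀ {x y t : ℝ}, x ∈ Set.Icc (0:ℝ) L → y ∈ Set.Ioo (0:ℝ) b →
      t ∈ Set.Icc T₁ T₂ →
      HasDerivAt (fun z => pd2 w x z t) (pd2 (pd2 u) x y t - pd2 (pd2 v) x y t) y := by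
    intro x y t hx hy ht
    have hp : ((x, y, t) : ℝ × ℝ × ℝ) ∈ S := hmem hx (Set.Ioo_subset_Icc_self hy) ht
    refine ((hu22 hp).sub (hv22 hp)).congr_of_eventuallyEq ?_
    filter_upwards [Ioo_mem_nhds hy.1 hy.2] with z hz
    exact hpd2w (hmem hx (Set.Ioo_subset_Icc_self hz) ht)
  have hpd11w : ∀ {x y t : ℝ}, x ∈ Set.Ioo (0:ℝ) L → y ∈ Set.Icc (0:ℝ) b →
      t ∈ Set.Icc T₁ T₂ →
      pd1 (pd1 w) x y t = pd1 (pd1 u) x y t - pd1 (pd1 v) x y t := by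
    intro x y t hx hy ht
    have := (hw11 hx hy ht).deriv
    simpa [pd1] using this
  have hpd22w : ∀ {x y t : ℝ}, x ∈ Set.Icc (0:ℝ) L → y ∈ Set.Ioo (0:ℝ) b →
      t ∈ Set.Icc T₁ T₂ →
      pd2 (pd2 w) x y t = pd2 (pd2 u) x y t - pd2 (pd2 v) x y t := by
    intro x y t hx hy ht
    have := (hw22 hx hy ht).deriv
    simpa [pd2] using this
  -- H facts
  have hHt : ∀ {x y t : ℝ}, ((x, y, t) : ℝ × ℝ × ℝ) ∈ S →
      HasDerivAt (fun τ => H (u x y τ) - H (v x y τ))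
        ((fderiv ℝ H (u x y t)) (pdt u x y t) - (fderiv ℝ H (v x y t)) (pdt v x y t)) t :=
    fun hp => (((hH _).hasFDerivAt.comp_hasDerivAt _ (hut hp)).sub
      ((hH _).hasFDerivAt.comp_hasDerivAt _ (hvt hp)))
  have hpdtH : ∀ {x y t : ℝ}, ((x, y, t) : ℝ × ℝ × ℝ) ∈ S →
      pdt (fun a b' c => H (u a b' c) - H (v a b' c)) x y t
        = (fderiv ℝ H (u x y t)) (pdt u x y t) - (fderiv ℝ H (v x y t)) (pdt v x y t) := by
    intro x y t hp
    have := (hHt hp).deriv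
    simpa [pdt] using this
  have hpd1FG : ∀ {x y t : ℝ}, ((x, y, t) : ℝ × ℝ × ℝ) ∈ S →
      pd1 (fun a b' c => F₁ a b' c - G₁ a b' c) x y t = pd1 F₁ x y t - pd1 G₁ x y t := by
    intro x y t hp
    have := ((hF₁1 hp).sub (hG₁1 hp)).deriv
    exact this
  have hpd2FG : ∀ {x y t : ℝ}, ((x, y, t) : ℝ × ℝ × ℝ) ∈ S →
      pd2 (fun a b' c => F₂ a b' c - G₂ a b' c) x y t = pd2 F₂ x y t - pd2 G₂ x y t := by
    intro x y t hp
    have := ((hF₂2 hp).sub (hG₂2 hp)).deriv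
    exact this
  -- continuity facts
  have Hc : Continuous H := continuous_iff_continuousAt.mpr fun z => (hH z).continuousAt
  have hUcS : ContinuousOn (fun p : ℝ × ℝ × ℝ => U p.1 p.2.1 p.2.2) S :=
    (CGOAux.cgo2_continuous μ lam s d₁ d₂).continuousOn
  have hwc : ContinuousOn (fun p : ℝ × ℝ × ℝ => w p.1 p.2.1 p.2.2) S := by
    exact hu.cont.sub hv.cont
  have hpd1wc : ContinuousOn (fun p : ℝ × ℝ × ℝ => pd1 w p.1 p.2.1 p.2.2) S :=
    (hu.cont1.sub hv.cont1).congr fun p hp => hpd1w hp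
  have hpd2wc : ContinuousOn (fun p : ℝ × ℝ × ℝ => pd2 w p.1 p.2.1 p.2.2) S :=
    (hu.cont2.sub hv.cont2).congr fun p hp => hpd2w hp
  have hHuc : ContinuousOn (fun p : ℝ × ℝ × ℝ => H (u p.1 p.2.1 p.2.2)) S :=
    Hc.comp_continuousOn hu.cont
  have hHvc : ContinuousOn (fun p : ℝ × ℝ × ℝ => H (v p.1 p.2.1 p.2.2)) S :=
    Hc.comp_continuousOn hv.cont
  have hfHu : ContinuousOn
      (fun p : ℝ × ℝ × ℝ => (fderiv ℝ H (u p.1 p.2.1 p.2.2)) (pdt u p.1 p.2.1 p.2.2)) S :=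
    (hH'.comp_continuousOn hu.cont).clm_apply hu.contt
  have hfHv : ContinuousOn
      (fun p : ℝ × ℝ × ℝ => (fderiv ℝ H (v p.1 p.2.1 p.2.2)) (pdt v p.1 p.2.1 p.2.2)) S :=
    (hH'.comp_continuousOn hv.cont).clm_apply hv.contt
  -- the flux functions and the derivative-formula functions
  set Af := fun x y t : ℝ => (μ : ℂ) * (w x y t * (α * U x y t) - U x y t * pd1 w x y t)
      + (F₁ x y t - G₁ x y t) * U x y t with hAfdef
  set Bf := fun x y t : ℝ => (μ : ℂ) * (w x y t * (β * U x y t) - U x y t * pd2 w x y t)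
      + (F₂ x y t - G₂ x y t) * U x y t with hBfdef
  set dA := fun x y t : ℝ => (μ : ℂ) * (w x y t * (α * (α * U x y t))
        - U x y t * (pd1 (pd1 u) x y t - pd1 (pd1 v) x y t))
      + ((pd1 F₁ x y t - pd1 G₁ x y t) * U x y t + (F₁ x y t - G₁ x y t) * (α * U x y t))
    with hdAdef
  set dB := fun x y t : ℝ => (μ : ℂ) * (w x y t * (β * (β * U x y t))
        - U x y t * (pd2 (pd2 u) x y t - pd2 (pd2 v) x y t))
      + ((pd2 F₂ x y t - pd2 G₂ x y t) * U x y t + (F₂ x y t - G₂ x y t) * (β * U x y t))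
    with hdBdef
  set dΦ := fun x y t : ℝ =>
      ((fderiv ℝ H (u x y t)) (pdt u x y t) - (fderiv ℝ H (v x y t)) (pdt v x y t)) * U x y t
      + (H (u x y t) - H (v x y t)) * ((lam : ℂ) * U x y t) with hdΦdef
  have hcAf : ContinuousOn (fun p : ℝ × ℝ × ℝ => Af p.1 p.2.1 p.2.2) S := by
    rw [hAfdef]
    exact (continuousOn_const.mul ((hwc.mul (continuousOn_const.mul hUcS)).sub
      (hUcS.mul hpd1wc))).add ((hF₁.cont.sub hG₁.cont).mul hUcS)
  have hcBf : ContinuousOn (fun p : ℝ × ℝ × ℝ => Bf p.1 p.2.1 p.2.2) S := by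
    rw [hBfdef]
    exact (continuousOn_const.mul ((hwc.mul (continuousOn_const.mul hUcS)).sub
      (hUcS.mul hpd2wc))).add ((hF₂.cont.sub hG₂.cont).mul hUcS)
  have hcdA : ContinuousOn (fun p : ℝ × ℝ × ℝ => dA p.1 p.2.1 p.2.2) S := by
    rw [hdAdef]
    exact (continuousOn_const.mul ((hwc.mul (continuousOn_const.mul
      (continuousOn_const.mul hUcS))).sub (hUcS.mul (hu.cont11.sub hv.cont11)))).add
      (((hF₁.cont1.sub hG₁.cont1).mul hUcS).add
        ((hF₁.cont.sub hG₁.cont).mul (continuousOn_const.mul hUcS)))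
  have hcdB : ContinuousOn (fun p : ℝ × ℝ × ℝ => dB p.1 p.2.1 p.2.2) S := by
    rw [hdBdef]
    exact (continuousOn_const.mul ((hwc.mul (continuousOn_const.mul
      (continuousOn_const.mul hUcS))).sub (hUcS.mul (hu.cont22.sub hv.cont22)))).add
      (((hF₂.cont2.sub hG₂.cont2).mul hUcS).add
        ((hF₂.cont.sub hG₂.cont).mul (continuousOn_const.mul hUcS)))
  have hcdΦ : ContinuousOn (fun p : ℝ × ℝ × ℝ => dΦ p.1 p.2.1 p.2.2) S := by
    rw [hdΦdef]
    exact ((hfHu.sub hfHv).mul hUcS).add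
      ((hHuc.sub hHvc).mul (continuousOn_const.mul hUcS))
  -- Step E2 : the x₂-flux triple integral vanishes
  have E2 : (∫ t in T₁..T₂, ∫ x₁ in (0:ℝ)..L, ∫ x₂ in (0:ℝ)..b, dB x₁ x₂ t) = 0 := by
    have inner0 : ∀ t ∈ Set.Icc T₁ T₂, ∀ x ∈ Set.Icc (0:ℝ) L,
        (∫ y in (0:ℝ)..b, dB x y t) = 0 := by
      intro t ht x hx
      have hderiv : ∀ yy ∈ Set.Ioo (0:ℝ) b,
          HasDerivAt (fun z => Bf x z t) (dB x yy t) yy := by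
        intro y hy
        have hp : ((x, y, t) : ℝ × ℝ × ℝ) ∈ S := hmem hx (Set.Ioo_subset_Icc_self hy) ht
        have h1 : HasDerivAt (fun z => w x z t) (pd2 u x y t - pd2 v x y t) y := hw2 hp
        have h2 := hUd2 x y t
        have h3 : HasDerivAt (fun z => β * U x z t) (β * (β * U x y t)) y := h2.const_mul β
        have h4 : HasDerivAt (fun z => pd2 w x z t)
            (pd2 (pd2 u) x y t - pd2 (pd2 v) x y t) y := hw22 hx hy ht
        have h5 : HasDerivAt (fun z => F₂ x z t - G₂ x z t)
            (pd2 F₂ x y t - pd2 G₂ x y t) y := (hF₂2 hp).sub (hG₂2 hp)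
        have hBig := (((h1.mul h3).sub (h2.mul h4)).const_mul (μ : ℂ)).add (h5.mul h2)
        simp only [hBfdef, hdBdef]
        refine hBig.congr_deriv ?_
        rw [hpd2w hp]
        ring
      have hcont : ContinuousOn (fun z => Bf x z t) (Set.Icc (0:ℝ) b) :=
        CGOAux.contOn_slice2 hcBf fun y hy => hmem hx hy ht
      have hint : IntervalIntegrable (fun z => dB x z t) MeasureTheory.volume 0 b :=
        CGOAux.intIntOn hb0 (CGOAux.contOn_slice2 hcdB fun y hy => hmem hx hy ht)
      have hftc : (∫ y in (0:ℝ)..b, dB x y t) = Bf x b t - Bf x 0 t :=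
        CGOAux.ftcIoo hb0 hcont hderiv hint
      rw [hftc]
      obtain ⟨hbc1, hbc2, hbc3, hbc4⟩ := hBC x hx t ht
      simp only [hBfdef]
      linear_combination (U x b t) * hbc4 + (U x 0 t) * hbc3
        + ((μ : ℂ) * β * U x b t) * hbc2 - ((μ : ℂ) * β * U x 0 t) * hbc1
    calc (∫ t in T₁..T₂, ∫ x₁ in (0:ℝ)..L, ∫ x₂ in (0:ℝ)..b, dB x₁ x₂ t)
        = ∫ t in T₁..T₂, ∫ x₁ in (0:ℝ)..L, (0 : ℂ) := by
          refine intervalIntegral.integral_congr fun t ht => ?_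
          rw [Set.uIcc_of_le hT0] at ht
          refine intervalIntegral.integral_congr fun x hx => ?_
          rw [Set.uIcc_of_le hL0] at hx
          exact inner0 t ht x hx
      _ = 0 := by simp
  -- Step E3 : the time-derivative triple integral gives I₅
  have E3 : (∫ t in T₁..T₂, ∫ x₁ in (0:ℝ)..L, ∫ x₂ in (0:ℝ)..b, dΦ x₁ x₂ t)
      = ∫ x₁ in (0:ℝ)..L, ∫ x₂ in (0:ℝ)..b,
          ((H (u x₁ x₂ T₂) - H (v x₁ x₂ T₂)) * U x₁ x₂ T₂
            - (H (u x₁ x₂ T₁) - H (v x₁ x₂ T₁)) * U x₁ x₂ T₁) := by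
    have hswap : (∫ t in T₁..T₂, ∫ x₁ in (0:ℝ)..L, ∫ x₂ in (0:ℝ)..b, dΦ x₁ x₂ t)
        = ∫ x₁ in (0:ℝ)..L, ∫ x₂ in (0:ℝ)..b, ∫ t in T₁..T₂, dΦ x₁ x₂ t :=
      CGOAux.swap3 hL0 hb0 hT0 hcdΦ
    rw [hswap]
    refine intervalIntegral.integral_congr fun x hx => ?_
    rw [Set.uIcc_of_le hL0] at hx
    refine intervalIntegral.integral_congr fun y hy => ?_
    rw [Set.uIcc_of_le hb0] at hy
    have hderiv : ∀ τ ∈ Set.Ioo T₁ T₂,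
        HasDerivAt (fun τ' => (H (u x y τ') - H (v x y τ')) * U x y τ') (dΦ x y τ) τ := by
      intro τ hτ
      have hp : ((x, y, τ) : ℝ × ℝ × ℝ) ∈ S := hmem hx hy (Set.Ioo_subset_Icc_self hτ)
      have hBig := (hHt hp).mul (hUdt x y τ)
      simp only [hdΦdef]
      exact hBig
    have hcont : ContinuousOn (fun τ => (H (u x y τ) - H (v x y τ)) * U x y τ)
        (Set.Icc T₁ T₂) :=
      CGOAux.contOn_slicet (F := fun a b' c => (H (u a b' c) - H (v a b' c)) * U a b' c)
        ((hHuc.sub hHvc).mul hUcS) fun τ hτ => hmem hx hy hτ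
    have hint : IntervalIntegrable (fun τ => dΦ x y τ) MeasureTheory.volume T₁ T₂ :=
      CGOAux.intIntOn hT0 (CGOAux.contOn_slicet hcdΦ fun τ hτ => hmem hx hy hτ)
    exact CGOAux.ftcIoo hT0 hcont hderiv hint
  have hLmem : L ∈ Set.Icc (0:ℝ) L := ⟨hL0, le_rfl⟩
  have h0mem : (0:ℝ) ∈ Set.Icc (0:ℝ) L := ⟨le_rfl, hL0⟩
  have edge : ∀ X : ℝ → ℝ → ℝ → ℂ, ContinuousOn (fun p : ℝ × ℝ × ℝ => X p.1 p.2.1 p.2.2) S →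
      ∀ x₀ ∈ Set.Icc (0:ℝ) L,
      ContinuousOn (fun p : ℝ × ℝ => X x₀ p.2 p.1) (Set.Icc T₁ T₂ ×ˢ Set.Icc (0:ℝ) b) :=
    fun X hX x₀ hx₀ => hX.comp
      ((by fun_prop : Continuous fun p : ℝ × ℝ => ((x₀, p.2, p.1) : ℝ × ℝ × ℝ))).continuousOn
      (fun p hp => hmem hx₀ hp.2 hp.1)
  -- Step E1 : the x₁-flux triple integral gives I₁ + I₂
  have E1 : (∫ t in T₁..T₂, ∫ x₁ in (0:ℝ)..L, ∫ x₂ in (0:ℝ)..b, dA x₁ x₂ t)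
      = (μ : ℂ) * (∫ t in T₁..T₂, ∫ x₂ in (0:ℝ)..b,
          (w L x₂ t * (α * U L x₂ t) - U L x₂ t * pd1 w L x₂ t -
            (w 0 x₂ t * (α * U 0 x₂ t) - U 0 x₂ t * pd1 w 0 x₂ t)))
        + ∫ t in T₁..T₂, ∫ x₂ in (0:ℝ)..b,
            ((F₁ L x₂ t - G₁ L x₂ t) * U L x₂ t - (F₁ 0 x₂ t - G₁ 0 x₂ t) * U 0 x₂ t) := by
    have step : ∀ t ∈ Set.Icc T₁ T₂, (∫ x₁ in (0:ℝ)..L, ∫ x₂ in (0:ℝ)..b, dA x₁ x₂ t)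
        = ∫ x₂ in (0:ℝ)..b,
            ((μ : ℂ) * (w L x₂ t * (α * U L x₂ t) - U L x₂ t * pd1 w L x₂ t -
              (w 0 x₂ t * (α * U 0 x₂ t) - U 0 x₂ t * pd1 w 0 x₂ t))
            + ((F₁ L x₂ t - G₁ L x₂ t) * U L x₂ t - (F₁ 0 x₂ t - G₁ 0 x₂ t) * U 0 x₂ t)) := by
      intro t ht
      have hsw : (∫ x₁ in (0:ℝ)..L, ∫ x₂ in (0:ℝ)..b, dA x₁ x₂ t)
          = ∫ x₂ in (0:ℝ)..b, ∫ x₁ in (0:ℝ)..L, dA x₁ x₂ t :=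
        CGOAux.swap2 (h := fun x y => dA x y t) hL0 hb0
          (CGOAux.contOn_slice12 hcdA fun p hp => hmem hp.1 hp.2 ht)
      rw [hsw]
      refine intervalIntegral.integral_congr fun y hy => ?_
      rw [Set.uIcc_of_le hb0] at hy
      have hderiv : ∀ xx ∈ Set.Ioo (0:ℝ) L,
          HasDerivAt (fun z => Af z y t) (dA xx y t) xx := by
        intro x hx
        have hp : ((x, y, t) : ℝ × ℝ × ℝ) ∈ S := hmem (Set.Ioo_subset_Icc_self hx) hy ht
        have h1 : HasDerivAt (fun z => w z y t) (pd1 u x y t - pd1 v x y t) x := hw1 hp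
        have h2 := hUd1 x y t
        have h3 : HasDerivAt (fun z => α * U z y t) (α * (α * U x y t)) x := h2.const_mul α
        have h4 : HasDerivAt (fun z => pd1 w z y t)
            (pd1 (pd1 u) x y t - pd1 (pd1 v) x y t) x := hw11 hx hy ht
        have h5 : HasDerivAt (fun z => F₁ z y t - G₁ z y t)
            (pd1 F₁ x y t - pd1 G₁ x y t) x := (hF₁1 hp).sub (hG₁1 hp)
        have hBig := (((h1.mul h3).sub (h2.mul h4)).const_mul (μ : ℂ)).add (h5.mul h2)
        simp only [hAfdef, hdAdef]
        refine hBig.congr_deriv ?_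
        rw [hpd1w hp]
        ring
      have hcont : ContinuousOn (fun z => Af z y t) (Set.Icc (0:ℝ) L) :=
        CGOAux.contOn_slice1 hcAf fun x hx => hmem hx hy ht
      have hint : IntervalIntegrable (fun z => dA z y t) MeasureTheory.volume 0 L :=
        CGOAux.intIntOn hL0 (CGOAux.contOn_slice1 hcdA fun x hx => hmem hx hy ht)
      have hftc : (∫ x₁ in (0:ℝ)..L, dA x₁ y t) = Af L y t - Af 0 y t :=
        CGOAux.ftcIoo hL0 hcont hderiv hint
      rw [hftc]
      simp only [hAfdef]
      ring
    calc (∫ t in T₁..T₂, ∫ x₁ in (0:ℝ)..L, ∫ x₂ in (0:ℝ)..b, dA x₁ x₂ t)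
        = ∫ t in T₁..T₂, ∫ x₂ in (0:ℝ)..b,
            ((μ : ℂ) * (w L x₂ t * (α * U L x₂ t) - U L x₂ t * pd1 w L x₂ t -
              (w 0 x₂ t * (α * U 0 x₂ t) - U 0 x₂ t * pd1 w 0 x₂ t))
            + ((F₁ L x₂ t - G₁ L x₂ t) * U L x₂ t - (F₁ 0 x₂ t - G₁ 0 x₂ t) * U 0 x₂ t)) := by
          refine intervalIntegral.integral_congr fun t ht => ?_
          rw [Set.uIcc_of_le hT0] at ht
          exact step t ht
      _ = (∫ t in T₁..T₂, ∫ x₂ in (0:ℝ)..b,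
            (μ : ℂ) * (w L x₂ t * (α * U L x₂ t) - U L x₂ t * pd1 w L x₂ t -
              (w 0 x₂ t * (α * U 0 x₂ t) - U 0 x₂ t * pd1 w 0 x₂ t)))
          + ∫ t in T₁..T₂, ∫ x₂ in (0:ℝ)..b,
            ((F₁ L x₂ t - G₁ L x₂ t) * U L x₂ t - (F₁ 0 x₂ t - G₁ 0 x₂ t) * U 0 x₂ t) := by
          refine CGOAux.J2add hT0 hb0 ?_ ?_
          · exact continuousOn_const.mul ((((edge w hwc L hLmem).mul
              (continuousOn_const.mul (edge U hUcS L hLmem))).sub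
              ((edge U hUcS L hLmem).mul (edge (pd1 w) hpd1wc L hLmem))).sub
              (((edge w hwc 0 h0mem).mul (continuousOn_const.mul (edge U hUcS 0 h0mem))).sub
              ((edge U hUcS 0 h0mem).mul (edge (pd1 w) hpd1wc 0 h0mem))))
          · exact (((edge F₁ hF₁.cont L hLmem).sub (edge G₁ hG₁.cont L hLmem)).mul
              (edge U hUcS L hLmem)).sub
              (((edge F₁ hF₁.cont 0 h0mem).sub (edge G₁ hG₁.cont 0 h0mem)).mul
              (edge U hUcS 0 h0mem))
      _ = (μ : ℂ) * (∫ t in T₁..T₂, ∫ x₂ in (0:ℝ)..b,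
            (w L x₂ t * (α * U L x₂ t) - U L x₂ t * pd1 w L x₂ t -
              (w 0 x₂ t * (α * U 0 x₂ t) - U 0 x₂ t * pd1 w 0 x₂ t)))
          + ∫ t in T₁..T₂, ∫ x₂ in (0:ℝ)..b,
            ((F₁ L x₂ t - G₁ L x₂ t) * U L x₂ t - (F₁ 0 x₂ t - G₁ 0 x₂ t) * U 0 x₂ t) := by
          simp only [intervalIntegral.integral_const_mul]
  -- KEY pointwise identity on the open box
  have KEY : ∀ x ∈ Set.Ioo (0:ℝ) L, ∀ y ∈ Set.Ioo (0:ℝ) b, ∀ t ∈ Set.Ioo T₁ T₂,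
      dA x y t + dB x y t + dΦ x y t
        = (f x y t - g x y t) * U x y t
          + ((F₁ x y t - G₁ x y t) * (α * U x y t) + (F₂ x y t - G₂ x y t) * (β * U x y t))
          + (-(lam : ℂ)) * ((w x y t - (H (u x y t) - H (v x y t))) * U x y t) := by
    intro x hx y hy t ht
    have hxI := Set.Ioo_subset_Icc_self hx
    have hyI := Set.Ioo_subset_Icc_self hy
    have htI := Set.Ioo_subset_Icc_self ht
    have hp : ((x, y, t) : ℝ × ℝ × ℝ) ∈ S := hmem hxI hyI htI
    have e := hPDE x hx y hy t ht
    rw [lap, hpdtH hp, hpd11w hx hyI htI, hpd22w hxI hy htI, hpd1FG hp, hpd2FG hp] at e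
    have hkey : (μ : ℂ) * (α ^ 2 + β ^ 2) = -(lam : ℂ) := CGOAux.cgo2_key hμ hlam hs hd
    simp only [hdAdef, hdBdef, hdΦdef]
    have hwv : w x y t = u x y t - v x y t := rfl
    linear_combination (U x y t) * e + (w x y t * U x y t) * hkey
  -- split the right-hand side
  have hs1 : (∫ t in T₁..T₂, ∫ x₁ in (0:ℝ)..L, ∫ x₂ in (0:ℝ)..b,
        (dA x₁ x₂ t + dB x₁ x₂ t + dΦ x₁ x₂ t))
      = (∫ t in T₁..T₂, ∫ x₁ in (0:ℝ)..L, ∫ x₂ in (0:ℝ)..b, (dA x₁ x₂ t + dB x₁ x₂ t))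
        + ∫ t in T₁..T₂, ∫ x₁ in (0:ℝ)..L, ∫ x₂ in (0:ℝ)..b, dΦ x₁ x₂ t :=
    CGOAux.Jadd hL0 hb0 hT0 (hcdA.add hcdB) hcdΦ
  have hs2 : (∫ t in T₁..T₂, ∫ x₁ in (0:ℝ)..L, ∫ x₂ in (0:ℝ)..b, (dA x₁ x₂ t + dB x₁ x₂ t))
      = (∫ t in T₁..T₂, ∫ x₁ in (0:ℝ)..L, ∫ x₂ in (0:ℝ)..b, dA x₁ x₂ t)
        + ∫ t in T₁..T₂, ∫ x₁ in (0:ℝ)..L, ∫ x₂ in (0:ℝ)..b, dB x₁ x₂ t :=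
    CGOAux.Jadd hL0 hb0 hT0 hcdA hcdB
  have hsum2 : (∫ t in T₁..T₂, ∫ x₁ in (0:ℝ)..L, ∫ x₂ in (0:ℝ)..b,
        (dA x₁ x₂ t + dB x₁ x₂ t + dΦ x₁ x₂ t))
      = ∫ t in T₁..T₂, ∫ x₁ in (0:ℝ)..L, ∫ x₂ in (0:ℝ)..b,
          ((f x₁ x₂ t - g x₁ x₂ t) * U x₁ x₂ t
            + ((F₁ x₁ x₂ t - G₁ x₁ x₂ t) * (α * U x₁ x₂ t)
              + (F₂ x₁ x₂ t - G₂ x₁ x₂ t) * (β * U x₁ x₂ t))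
            + (-(lam : ℂ)) * ((w x₁ x₂ t - (H (u x₁ x₂ t) - H (v x₁ x₂ t))) * U x₁ x₂ t)) :=
    CGOAux.Jcongr hL0 hb0 hT0 KEY
  have hc34 : ContinuousOn (fun p : ℝ × ℝ × ℝ =>
      (f p.1 p.2.1 p.2.2 - g p.1 p.2.1 p.2.2) * U p.1 p.2.1 p.2.2
        + ((F₁ p.1 p.2.1 p.2.2 - G₁ p.1 p.2.1 p.2.2) * (α * U p.1 p.2.1 p.2.2)
          + (F₂ p.1 p.2.1 p.2.2 - G₂ p.1 p.2.1 p.2.2) * (β * U p.1 p.2.1 p.2.2))) S :=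
    ((hf.sub hg).mul hUcS).add
      (((hF₁.cont.sub hG₁.cont).mul (continuousOn_const.mul hUcS)).add
        ((hF₂.cont.sub hG₂.cont).mul (continuousOn_const.mul hUcS)))
  have hc6 : ContinuousOn (fun p : ℝ × ℝ × ℝ =>
      (-(lam : ℂ)) * ((w p.1 p.2.1 p.2.2 - (H (u p.1 p.2.1 p.2.2) - H (v p.1 p.2.1 p.2.2)))
        * U p.1 p.2.1 p.2.2)) S :=
    continuousOn_const.mul ((hwc.sub (hHuc.sub hHvc)).mul hUcS)
  have hs4 : (∫ t in T₁..T₂, ∫ x₁ in (0:ℝ)..L, ∫ x₂ in (0:ℝ)..b,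
        ((f x₁ x₂ t - g x₁ x₂ t) * U x₁ x₂ t
          + ((F₁ x₁ x₂ t - G₁ x₁ x₂ t) * (α * U x₁ x₂ t)
            + (F₂ x₁ x₂ t - G₂ x₁ x₂ t) * (β * U x₁ x₂ t))
          + (-(lam : ℂ)) * ((w x₁ x₂ t - (H (u x₁ x₂ t) - H (v x₁ x₂ t))) * U x₁ x₂ t)))
      = (∫ t in T₁..T₂, ∫ x₁ in (0:ℝ)..L, ∫ x₂ in (0:ℝ)..b,
          ((f x₁ x₂ t - g x₁ x₂ t) * U x₁ x₂ t
            + ((F₁ x₁ x₂ t - G₁ x₁ x₂ t) * (α * U x₁ x₂ t)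
              + (F₂ x₁ x₂ t - G₂ x₁ x₂ t) * (β * U x₁ x₂ t))))
        + ∫ t in T₁..T₂, ∫ x₁ in (0:ℝ)..L, ∫ x₂ in (0:ℝ)..b,
            (-(lam : ℂ)) * ((w x₁ x₂ t - (H (u x₁ x₂ t) - H (v x₁ x₂ t))) * U x₁ x₂ t) :=
    CGOAux.Jadd hL0 hb0 hT0 hc34 hc6
  have hs5 : (∫ t in T₁..T₂, ∫ x₁ in (0:ℝ)..L, ∫ x₂ in (0:ℝ)..b,
        ((f x₁ x₂ t - g x₁ x₂ t) * U x₁ x₂ t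
          + ((F₁ x₁ x₂ t - G₁ x₁ x₂ t) * (α * U x₁ x₂ t)
            + (F₂ x₁ x₂ t - G₂ x₁ x₂ t) * (β * U x₁ x₂ t))))
      = (∫ t in T₁..T₂, ∫ x₁ in (0:ℝ)..L, ∫ x₂ in (0:ℝ)..b,
          (f x₁ x₂ t - g x₁ x₂ t) * U x₁ x₂ t)
        + ∫ t in T₁..T₂, ∫ x₁ in (0:ℝ)..L, ∫ x₂ in (0:ℝ)..b,
            ((F₁ x₁ x₂ t - G₁ x₁ x₂ t) * (α * U x₁ x₂ t)
              + (F₂ x₁ x₂ t - G₂ x₁ x₂ t) * (β * U x₁ x₂ t)) :=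
    CGOAux.Jadd hL0 hb0 hT0 ((hf.sub hg).mul hUcS)
      (((hF₁.cont.sub hG₁.cont).mul (continuousOn_const.mul hUcS)).add
        ((hF₂.cont.sub hG₂.cont).mul (continuousOn_const.mul hUcS)))
  have hs6 : (∫ t in T₁..T₂, ∫ x₁ in (0:ℝ)..L, ∫ x₂ in (0:ℝ)..b,
        (-(lam : ℂ)) * ((w x₁ x₂ t - (H (u x₁ x₂ t) - H (v x₁ x₂ t))) * U x₁ x₂ t))
      = (-(lam : ℂ)) * ∫ t in T₁..T₂, ∫ x₁ in (0:ℝ)..L, ∫ x₂ in (0:ℝ)..b,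
          (w x₁ x₂ t - (H (u x₁ x₂ t) - H (v x₁ x₂ t))) * U x₁ x₂ t := by
    simp only [intervalIntegral.integral_const_mul]
  linear_combination hsum2 + hs4 + hs5 + hs6 - hs1 - hs2 - E1 - E2 - E3
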